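/- For a group operad 𝒢 with structure maps d_i and s_i induced by the operad structure, the multiplication interacts with faces and degeneracies by d_i(ab) = (d_i a)(d_{a(i)} b) and s_i(ab) = (s_i a)(s_{a(i)} b), where a(i) = (π a)(i). -/

import Mathlib

/-- Distributing a sigma type over a sum index. -/
def sumSigmaDistrib {α β : Type*} (P : α ⊕ β → Type*) :
    (Σ s, P s) ≃ (Σ a, P (Sum.inl a)) ⊕ (Σ b, P (Sum.inr b)) where
  toFun p :=
    match p with
    | ⟨Sum.inl a, x⟩ => Sum.inl ⟨a, x⟩
    | ⟨Sum.inr b, x⟩ => Sum.inr ⟨b, x⟩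
  invFun q :=
    match q with
    | Sum.inl ⟨a, x⟩ => ⟨Sum.inl a, x⟩
    | Sum.inr ⟨b, x⟩ => ⟨Sum.inr b, x⟩
  left_inv p := by rcases p with ⟨a | b, x⟩ <;> rfl
  right_inv q := by rcases q with ⟨a, x⟩ | ⟨b, x⟩ <;> rfl

/-- A sigma type over `Fin 1` is just its unique fiber. -/
def sigmaFin1 (Q : Fin 1 → Type*) : (Σ b : Fin 1, Q b) ≃ Q 0 where
  toFun p := Fin.cases (motive := fun b => Q b → Q 0) id (fun i => i.elim0) p.1 p.2
  invFun x := ⟨0, x⟩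
  left_inv := by rintro ⟨b, x⟩; fin_cases b; rfl
  right_inv x := rfl

/-- The order-preserving equivalence `(Σ i : Fin k, Fin (m i)) ≃ Fin (∑ i, m i)`. -/
def finSigmaEquiv : ∀ (k : ℕ) (m : Fin k → ℕ), (Σ i : Fin k, Fin (m i)) ≃ Fin (∑ i, m i)
  | 0, m => (Equiv.equivOfIsEmpty _ (Fin 0)).trans (finCongr (by simp))
  | k+1, m =>
      ((Equiv.sigmaCongrLeft (β := fun i => Fin (m i)) (finSumFinEquiv (m := k) (n := 1))).symm.trans
        ((sumSigmaDistrib _).trans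
          ((Equiv.sumCongr (finSigmaEquiv k fun a => m (finSumFinEquiv (Sum.inl a)))
              (sigmaFin1 _)).trans
            (finSumFinEquiv.trans (finCongr (by
              rw [Fin.sum_univ_castSucc]
              congr 1))))))

/-- Block composition of permutations: `k` blocks of sizes `m 0, …, m (k-1)` are permuted
according to `σ` and the `i`-th block is permuted internally by `τ i`.  This is the operadic
composition of the symmetric groups operad `𝒮`. -/
def blockComp {k : ℕ} {m : Fin k → ℕ} (σ : Equiv.Perm (Fin k))
    (τ : (i : Fin k) → Equiv.Perm (Fin (m i))) : Equiv.Perm (Fin (∑ i, m i)) :=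
  let e₂ : (Σ i : Fin k, Fin (m i)) ≃ Σ j : Fin k, Fin (m (σ.symm j)) :=
    Equiv.sigmaCongr σ fun i => (τ i).trans (finCongr (congrArg m (σ.symm_apply_apply i).symm))
  ((finSigmaEquiv k m).symm.trans e₂).trans
    ((finSigmaEquiv k fun j => m (σ.symm j)).trans (finCongr (Equiv.sum_comp σ.symm m)))

/-- A group operad: an operad `𝒢 = {G n}` of groups together with a morphism `π` to the
symmetric groups operad, such that the identity of `G 1` is the operadic unit and the
operadic composition `γ` is a crossed homomorphism. -/
structure GroupOperad (G : ℕ → Type) [∀ n, Group (G n)] where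
  π : ∀ n, G n →* Equiv.Perm (Fin n)
  γ : ∀ {k : ℕ} {m : Fin k → ℕ}, G k → ((i : Fin k) → G (m i)) → G (∑ i, m i)
  one_γ : ∀ {n : ℕ} (b : G n), γ (1 : G 1) (fun _ : Fin 1 => b) = cast (congrArg G (by simp)) b
  γ_one : ∀ {k : ℕ} (a : G k), γ a (fun _ : Fin k => (1 : G 1)) = cast (congrArg G (by simp)) a
  crossed : ∀ {k : ℕ} {m : Fin k → ℕ} (a a' : G k) (b b' : (i : Fin k) → G (m i)),
      γ (a * a') (fun i => b i * b' i) =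
        γ a b *
          cast (congrArg G (Equiv.sum_comp (π k a).symm m))
            (γ a' fun i => b' ((π k a).symm i))
  π_γ : ∀ {k : ℕ} {m : Fin k → ℕ} (a : G k) (b : (i : Fin k) → G (m i)),
      π (∑ i, m i) (γ a b) = blockComp (π k a) fun i => π (m i) (b i)

/-- The face maps of a group operad: `d_i a = γ(a; e_1, …, e_0, …, e_1)` with `e_0 ∈ G 0`
inserted in the `i`-th slot. -/
def GroupOperad.face {G : ℕ → Type} [∀ n, Group (G n)] (P : GroupOperad G) {n : ℕ}
    (i : Fin (n + 1)) (a : G (n + 1)) : G n :=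
  cast (congrArg G
      (show (∑ j, Function.update (fun _ : Fin (n + 1) => 1) i 0 j) = n by
        rw [Finset.sum_update_of_mem (Finset.mem_univ i)]
        simp [Finset.sdiff_singleton_eq_erase, Finset.card_erase_of_mem]))
    (P.γ (m := Function.update (fun _ => 1) i 0) a fun j =>
      if h : j = i then
        cast (congrArg G (show (0 : ℕ) = _ by rw [h, Function.update_self])) (1 : G 0)
      else
        cast (congrArg G (show (1 : ℕ) = _ by rw [Function.update_of_ne h])) (1 : G 1))

/-- The degeneracy maps of a group operad: `s_i a = γ(a; e_1, …, e_2, …, e_1)` with `e_2 ∈ G 2`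
inserted in the `i`-th slot. -/
def GroupOperad.degen {G : ℕ → Type} [∀ n, Group (G n)] (P : GroupOperad G) {n : ℕ}
    (i : Fin n) (a : G n) : G (n + 1) :=
  cast (congrArg G
      (show (∑ j, Function.update (fun _ : Fin n => 1) i 2 j) = n + 1 by
        rw [Finset.sum_update_of_mem (Finset.mem_univ i)]
        have := i.pos
        simp [Finset.sdiff_singleton_eq_erase, Finset.card_erase_of_mem]
        omega))
    (P.γ (m := Function.update (fun _ => 1) i 2) a fun j =>
      if h : j = i then
        cast (congrArg G (show (2 : ℕ) = _ by rw [h, Function.update_self])) (1 : G 2)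
      else
        cast (congrArg G (show (1 : ℕ) = _ by rw [Function.update_of_ne h])) (1 : G 1))

section Aux

variable {G : ℕ → Type} [∀ n, Group (G n)] (P : GroupOperad G)

lemma cast_one' {p q : ℕ} (h : p = q) : cast (congrArg G h) (1 : G p) = 1 := by
  subst h; rfl

lemma cast_mul' {p q : ℕ} (h : p = q) (x y : G p) :
    cast (congrArg G h) (x * y) = cast (congrArg G h) x * cast (congrArg G h) y := by
  subst h; rfl

lemma cast_eq_cast_of_heq' {p q r : ℕ} (h : p = r) (h' : q = r) {x : G p} {y : G q}
    (hxy : HEq x y) : cast (congrArg G h) x = cast (congrArg G h') y := by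
  subst h'; subst h; exact eq_of_heq hxy

lemma gamma_one_congr {k : ℕ} {m m' : Fin k → ℕ} (h : m = m') (b : G k) :
    HEq (P.γ b (fun j => (1 : G (m j)))) (P.γ b (fun j => (1 : G (m' j)))) := by
  subst h; rfl

lemma update_comp_perm {k : ℕ} (σ : Equiv.Perm (Fin k)) (i : Fin k) (c : ℕ) :
    (fun j => Function.update (fun _ : Fin k => 1) i c (σ.symm j)) =
      Function.update (fun _ : Fin k => 1) (σ i) c := by
  funext j
  simp only [Function.update_apply, Equiv.symm_apply_eq]

lemma key_lemma {k : ℕ} (c : ℕ) (i : Fin k) (a b : G k) {s : ℕ}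
    (hs : (∑ j, Function.update (fun _ : Fin k => 1) i c j) = s)
    (ht : (∑ j, Function.update (fun _ : Fin k => 1) (P.π k a i) c j) = s) :
    cast (congrArg G hs)
        (P.γ (a * b) (fun j => (1 : G (Function.update (fun _ => 1) i c j)))) =
      cast (congrArg G hs)
          (P.γ a (fun j => (1 : G (Function.update (fun _ => 1) i c j)))) *
        cast (congrArg G ht)
          (P.γ b (fun j => (1 : G (Function.update (fun _ => 1) (P.π k a i) c j)))) := by
  have hcr := P.crossed (m := Function.update (fun _ : Fin k => 1) i c) a b
      (fun j => 1) (fun j => 1)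
  simp only [mul_one] at hcr
  rw [hcr, cast_mul' hs, cast_cast]
  congr 1
  exact cast_eq_cast_of_heq'
    ((Equiv.sum_comp (P.π k a).symm _).trans hs) ht
    (gamma_one_congr P (update_comp_perm (P.π k a) i c) b)

lemma face_family {n : ℕ} (i : Fin (n + 1)) :
    (fun j =>
        if h : j = i then
          cast (congrArg G (show (0 : ℕ) = _ by rw [h, Function.update_self])) (1 : G 0)
        else
          cast (congrArg G (show (1 : ℕ) = _ by rw [Function.update_of_ne h])) (1 : G 1)) =
      fun j => (1 : G (Function.update (fun _ : Fin (n + 1) => 1) i 0 j)) := by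
  funext j
  split
  · next h => exact cast_one' (by rw [h, Function.update_self])
  · next h => exact cast_one' (by rw [Function.update_of_ne h])

lemma degen_family {n : ℕ} (i : Fin n) :
    (fun j =>
        if h : j = i then
          cast (congrArg G (show (2 : ℕ) = _ by rw [h, Function.update_self])) (1 : G 2)
        else
          cast (congrArg G (show (1 : ℕ) = _ by rw [Function.update_of_ne h])) (1 : G 1)) =
      fun j => (1 : G (Function.update (fun _ : Fin n => 1) i 2 j)) := by
  funext j
  split
  · next h => exact cast_one' (by rw [h, Function.update_self])
  · next h => exact cast_one' (by rw [Function.update_of_ne h])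

end Aux

/-- For a group operad `𝒢` with the simplicial structure maps `d_i`, `s_i` induced by the operad
structure, multiplication interacts with faces and degeneracies by
`d_i(ab) = (d_i a)(d_{a(i)} b)` and `s_i(ab) = (s_i a)(s_{a(i)} b)`, where `a(i) = (π a)(i)`. -/
theorem groupOperad_face_degen_mul (G : ℕ → Type) [∀ n, Group (G n)] (P : GroupOperad G) :
    (∀ (n : ℕ) (i : Fin (n + 1)) (a b : G (n + 1)),
        P.face i (a * b) = P.face i a * P.face (P.π (n + 1) a i) b) ∧
    (∀ (n : ℕ) (i : Fin n) (a b : G n),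
        P.degen i (a * b) = P.degen i a * P.degen (P.π n a i) b) := by
  constructor
  · intro n i a b
    unfold GroupOperad.face
    rw [face_family, face_family]
    have hp : ∀ j : Fin (n + 1), (∑ l, Function.update (fun _ : Fin (n+1) => 1) j 0 l) = n := by
      intro j
      rw [Finset.sum_update_of_mem (Finset.mem_univ j)]
      simp [Finset.sdiff_singleton_eq_erase, Finset.card_erase_of_mem]
    exact key_lemma P 0 i a b (hp i) (hp _)
  · intro n i a b
    unfold GroupOperad.degen
    rw [degen_family, degen_family]
    have hp : ∀ j : Fin n, (∑ l, Function.update (fun _ : Fin n => 1) j 2 l) = n + 1 := by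
      intro j
      rw [Finset.sum_update_of_mem (Finset.mem_univ j)]
      have := j.pos
      simp [Finset.sdiff_singleton_eq_erase, Finset.card_erase_of_mem]
      omega
    exact key_lemma P 2 i a b (hp i) (hp _)
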